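/- For every n ≥ 1 and k ≥ 1, the map φ sending a k-bounded function f ∈ 𝓑_k(n) to the function v ↦ 2f(v) − k|v| on V(Q_n) is a bijection from 𝓑_k(n) onto Lip(Q_n; 𝒮_k), where 𝒮_k = {0,…,k} ∩ (k + 2ℤ) is the set of integers in {0,…,k} of the same parity as k. -/
import Mathlib

open Finset Classical

noncomputable section

def torus (m n : ℕ) : SimpleGraph (Fin n → ZMod m) :=
  SimpleGraph.fromRel (fun x y => ∃ i, x i = y i + 1 ∧ ∀ j, j ≠ i → x j = y j)

def cube (n : ℕ) : SimpleGraph (Fin n → ZMod 2) := torus 2 n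

def vset (n : ℕ) (v : Fin n → ZMod 2) : Finset (Fin n) :=
  univ.filter fun i => v i = 1

def IsKBounded (n k : ℕ) (f : Finset (Fin n) → ℕ) : Prop :=
  f ∅ = 0 ∧ ∀ (A : Finset (Fin n)) (x : Fin n), x ∉ A →
    f A ≤ f (insert x A) ∧ f (insert x A) ≤ f A + k

def IsLipSk (n k : ℕ) (g : (Fin n → ZMod 2) → ℤ) : Prop :=
  g 0 = 0 ∧ ∀ u v, (cube n).Adj u v →
    (g u - g v).natAbs ≤ k ∧ (g u - g v).natAbs % 2 = k % 2

def indFn (n : ℕ) (A : Finset (Fin n)) : Fin n → ZMod 2 := fun i => if i ∈ A then 1 else 0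

lemma zmod2_add_one : ∀ a b : ZMod 2, (a = b + 1) ↔ a ≠ b := by decide

lemma zmod2_ne_one : ∀ a : ZMod 2, a ≠ 1 → a = 0 := by decide

lemma cube_adj {n : ℕ} {u v : Fin n → ZMod 2} :
    (cube n).Adj u v ↔ ∃ i, u i ≠ v i ∧ ∀ j, j ≠ i → u j = v j := by
  simp only [cube, torus, SimpleGraph.fromRel_adj]
  constructor
  · rintro ⟨_, ⟨i, h1, h2⟩ | ⟨i, h1, h2⟩⟩
    · exact ⟨i, (zmod2_add_one _ _).mp h1, h2⟩
    · exact ⟨i, fun h => (zmod2_add_one _ _).mp h1 h.symm, fun j hj => (h2 j hj).symm⟩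
  · rintro ⟨i, h1, h2⟩
    exact ⟨fun h => h1 (congrFun h i), Or.inl ⟨i, (zmod2_add_one _ _).mpr h1, h2⟩⟩

lemma vset_indFn (n : ℕ) (A : Finset (Fin n)) : vset n (indFn n A) = A := by
  ext i
  by_cases h : i ∈ A <;> simp [vset, indFn, h]

lemma indFn_vset (n : ℕ) (v : Fin n → ZMod 2) : indFn n (vset n v) = v := by
  funext i
  by_cases h : v i = 1
  · simp [indFn, vset, h]
  · simp [indFn, vset, h, zmod2_ne_one _ h]

lemma indFn_empty (n : ℕ) : indFn n (∅ : Finset (Fin n)) = 0 := by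
  funext i; simp [indFn]

lemma vset_zero (n : ℕ) : vset n (0 : Fin n → ZMod 2) = ∅ := by
  ext i; simp [vset]

lemma adj_insert {n : ℕ} {A : Finset (Fin n)} {x : Fin n} (hx : x ∉ A) :
    (cube n).Adj (indFn n (insert x A)) (indFn n A) := by
  refine cube_adj.mpr ⟨x, ?_, fun j hj => ?_⟩
  · simp [indFn, hx]
  · simp [indFn, Finset.mem_insert, hj]

lemma vset_adj {n : ℕ} {u v : Fin n → ZMod 2} (h : (cube n).Adj u v) :
    (∃ i ∉ vset n v, vset n u = insert i (vset n v)) ∨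
    (∃ i ∉ vset n u, vset n v = insert i (vset n u)) := by
  obtain ⟨i, h1, h2⟩ := cube_adj.mp h
  by_cases hu : u i = 1
  · have hv : v i ≠ 1 := fun hv => h1 (hu.trans hv.symm)
    left
    refine ⟨i, by simp [vset, hv], ?_⟩
    ext j
    by_cases hj : j = i
    · subst hj; simp [vset, hu, hv]
    · simp [vset, Finset.mem_insert, hj, h2 j hj]
  · have hv : v i = 1 := by
      by_contra hv
      exact h1 ((zmod2_ne_one _ hu).trans (zmod2_ne_one _ hv).symm)
    right
    refine ⟨i, by simp [vset, hu], ?_⟩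
    ext j
    by_cases hj : j = i
    · subst hj; simp [vset, hu, hv]
    · simp [vset, Finset.mem_insert, hj, h2 j hj]

lemma lip_nonneg_even {n k : ℕ} {g : (Fin n → ZMod 2) → ℤ} (hg : IsLipSk n k g)
    (A : Finset (Fin n)) :
    0 ≤ g (indFn n A) + k * A.card ∧ (g (indFn n A) + (k : ℤ) * A.card) % 2 = 0 := by
  induction A using Finset.induction_on with
  | empty => simp [indFn_empty, hg.1]
  | @insert x A hx ih =>
    have h := hg.2 _ _ (adj_insert hx)
    rw [Finset.card_insert_of_notMem hx]
    push_cast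
    simp only [mul_add, mul_one] at *
    omega

theorem kBounded_equiv_lip (n k : ℕ) (hn : 1 ≤ n) (hk : 1 ≤ k) :
    Set.BijOn
      (fun (f : Finset (Fin n) → ℕ) (v : Fin n → ZMod 2) =>
        2 * (f (vset n v) : ℤ) - (k : ℤ) * ((vset n v).card : ℤ))
      {f | IsKBounded n k f} {g | IsLipSk n k g} := by
  refine ⟨?_, ?_, ?_⟩
  · -- MapsTo
    intro f hf
    constructor
    · simp [vset_zero, hf.1]
    · intro u v hadj
      rcases vset_adj hadj with ⟨i, hi, he⟩ | ⟨i, hi, he⟩ <;>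
        [have hb := hf.2 (vset n v) i hi; have hb := hf.2 (vset n u) i hi] <;>
        simp only [he, Finset.card_insert_of_notMem hi] <;> push_cast <;>
        simp only [mul_add, mul_one] <;> omega
  · -- InjOn
    intro f1 h1 f2 h2 heq
    funext A
    have := congrFun heq (indFn n A)
    simp only [vset_indFn] at this
    omega
  · -- SurjOn
    intro g hg
    set F : Finset (Fin n) → ℕ := fun A => (g (indFn n A) + k * A.card).toNat / 2 with hFdef
    have hF : ∀ A : Finset (Fin n), 2 * (F A : ℤ) = g (indFn n A) + k * A.card := by
      intro A
      have := lip_nonneg_even hg A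
      simp only [hFdef]
      push_cast
      omega
    refine ⟨F, ⟨?_, ?_⟩, ?_⟩
    · have := hF ∅
      rw [indFn_empty, hg.1] at this
      simp at this
      omega
    · intro A x hx
      have h := hg.2 _ _ (adj_insert hx)
      have h1 := hF A
      have h2 := hF (insert x A)
      rw [Finset.card_insert_of_notMem hx] at h2
      push_cast at h2
      simp only [mul_add, mul_one] at h2
      omega
    · funext v
      have := hF (vset n v)
      rw [indFn_vset] at this
      simp only []
      omega
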